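/- For any modal formula A, the following are equivalent: (1) A is a theorem of MNP; (2) A is valid in all MNP-frames; (3) A is valid in all finite MNP-frames. -/

import Mathlib

/-- Modal formulas: variables, ⊥, →, □. -/
inductive Fml : Type
  | var : ℕ → Fml
  | bot : Fml
  | imp : Fml → Fml → Fml
  | box : Fml → Fml
  deriving DecidableEq

namespace Fml

/-- ¬A is an abbreviation for A → ⊥. -/
def neg (A : Fml) : Fml := imp A bot

/-- ⊤ is an abbreviation for ¬⊥. -/
def top : Fml := neg bot

/-- A ∧ B is an abbreviation for ¬(A → ¬B). -/
def and (A B : Fml) : Fml := neg (imp A (neg B))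

/-- Uniform substitution. -/
def subst (σ : ℕ → Fml) : Fml → Fml
  | var n => σ n
  | bot => bot
  | imp A B => imp (subst σ A) (subst σ B)
  | box A => box (subst σ A)

end Fml

/-- A formula is a propositional tautology if it is true under every valuation
that respects ⊥ and →, treating variables and boxed formulas as atoms. -/
def IsTautology (A : Fml) : Prop :=
  ∀ val : Fml → Bool,
    (val Fml.bot = false) →
    (∀ B C : Fml, val (Fml.imp B C) = (!(val B) || val C)) →
    val A = true

/-- Provability in the extension of the logic MN by the axioms in `Ax`:
axioms are all propositional tautologies and the members of `Ax`; the rules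
are Modus Ponens, Necessitation, and RM. -/
inductive MNProv (Ax : Fml → Prop) : Fml → Prop
  | taut {A : Fml} : IsTautology A → MNProv Ax A
  | ax {A : Fml} : Ax A → MNProv Ax A
  | mp {A B : Fml} : MNProv Ax (A.imp B) → MNProv Ax A → MNProv Ax B
  | nec {A : Fml} : MNProv Ax A → MNProv Ax A.box
  | rm {A B : Fml} : MNProv Ax (A.imp B) → MNProv Ax (A.box.imp B.box)

/-- The axiom P : ¬□⊥. -/
def AxP : Fml → Prop := fun A => A = (Fml.box Fml.bot).neg

/-- The axiom scheme D : ¬(□B ∧ □¬B). -/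
def AxD : Fml → Prop := fun A => ∃ B : Fml, A = ((B.box).and (B.neg.box)).neg

/-- The axiom scheme 4 : □B → □□B. -/
def AxF : Fml → Prop := fun A => ∃ B : Fml, A = B.box.imp B.box.box

def MN : Fml → Prop := MNProv (fun _ => False)
def MNP : Fml → Prop := MNProv AxP
def MND : Fml → Prop := MNProv AxD
def MNF : Fml → Prop := MNProv AxF
def MNPF : Fml → Prop := MNProv (fun A => AxP A ∨ AxF A)
def MNDF : Fml → Prop := MNProv (fun A => AxD A ∨ AxF A)

/-- An MN-frame: a nonempty set `W` together with a relation between worlds and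
nonempty subsets of `W` satisfying monotonicity. -/
structure MNFrame (W : Type*) where
  nonempty : Nonempty W
  rel : W → Set W → Prop
  rel_nonempty : ∀ (x : W) (V : Set W), rel x V → V.Nonempty
  mono : ∀ (x : W) (V U : Set W), rel x V → V ⊆ U → rel x U

/-- `Sat` is a satisfaction relation on the MN-frame `F`. -/
structure IsSat {W : Type*} (F : MNFrame W) (Sat : W → Fml → Prop) : Prop where
  bot : ∀ x : W, ¬ Sat x Fml.bot
  imp : ∀ (x : W) (A B : Fml), Sat x (A.imp B) ↔ (Sat x A → Sat x B)
  box : ∀ (x : W) (A : Fml), Sat x A.box ↔ ∀ V : Set W, F.rel x V → ∃ y ∈ V, Sat y A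

/-- A formula is valid in an MN-frame if it is satisfied at every world under
every satisfaction relation on the frame. -/
def Valid {W : Type*} (F : MNFrame W) (A : Fml) : Prop :=
  ∀ Sat : W → Fml → Prop, IsSat F Sat → ∀ x : W, Sat x A

/-- Transitivity of an MN-frame. -/
def MNFrame.IsTransitive {W : Type*} (F : MNFrame W) : Prop :=
  ∀ (x : W) (V : Set W) (U : W → Set W),
    F.rel x V → (∀ y ∈ V, F.rel y (U y)) → F.rel x (⋃ y ∈ V, U y)

/-- MNP-frames: every world is related to some subset. -/
def MNFrame.IsMNP {W : Type*} (F : MNFrame W) : Prop :=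
  ∀ x : W, ∃ V : Set W, F.rel x V

/-- MND-frames: every world is related to `V` or to its complement. -/
def MNFrame.IsMND {W : Type*} (F : MNFrame W) : Prop :=
  ∀ (x : W) (V : Set W), F.rel x V ∨ F.rel x Vᶜ


/-! ## Propositional toolkit -/

namespace MNPsec
open Fml

/-- `val` respects the Boolean structure. -/
def Resp (val : Fml → Bool) : Prop :=
  val Fml.bot = false ∧ ∀ B C, val (Fml.imp B C) = (!(val B) || val C)

lemma Resp.valNeg {val} (h : Resp val) (X : Fml) : val X.neg = !val X := by
  simp [Fml.neg, h.2, h.1]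

lemma Resp.valAnd {val} (h : Resp val) (X Y : Fml) : val (X.and Y) = (val X && val Y) := by
  simp [Fml.and, h.2, h.1, h.valNeg]

lemma Resp.valTop {val} (h : Resp val) : val Fml.top = true := by
  simp [Fml.top, h.valNeg, h.1]

lemma entail1 {Ax : Fml → Prop} {P Q : Fml}
    (h : ∀ val : Fml → Bool, Resp val → val P = true → val Q = true)
    (hP : MNProv Ax P) : MNProv Ax Q := by
  refine MNProv.mp (MNProv.taut ?_) hP
  intro val hb hi
  rw [hi]
  cases hv : val P with
  | false => rfl
  | true => simp [h val ⟨hb, hi⟩ hv]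

lemma entail2 {Ax : Fml → Prop} {P Q R : Fml}
    (h : ∀ val : Fml → Bool, Resp val → val P = true → val Q = true → val R = true)
    (hP : MNProv Ax P) (hQ : MNProv Ax Q) : MNProv Ax R := by
  refine MNProv.mp (MNProv.mp (MNProv.taut ?_) hP) hQ
  intro val hb hi
  rw [hi, hi]
  cases hp : val P with
  | false => rfl
  | true =>
    cases hq : val Q with
    | false => simp
    | true => simp [h val ⟨hb, hi⟩ hp hq]

/-- Disjunction of a list. -/
def disj : List Fml → Fml
  | [] => Fml.bot
  | c :: L => Fml.imp c.neg (disj L)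

lemma val_disj {val} (h : Resp val) (L : List Fml) :
    val (disj L) = L.any (fun c => val c) := by
  induction L with
  | nil => simp [disj, h.1]
  | cons c L ih => simp [disj, h.2, h.valNeg, ih]

/-- Conjunction of a list. -/
def conj : List Fml → Fml
  | [] => Fml.top
  | c :: L => c.and (conj L)

lemma val_conj {val} (h : Resp val) (L : List Fml) :
    val (conj L) = L.all (fun c => val c) := by
  induction L with
  | nil => simp [conj, h.valTop]
  | cons c L ih => simp [conj, h.valAnd, ih]

lemma neg_of_imp_disj {Ax : Fml → Prop} {P : Fml} :
    ∀ {L : List Fml}, MNProv Ax (P.imp (disj L)) → (∀ c ∈ L, MNProv Ax c.neg) →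
      MNProv Ax P.neg
  | [], h, _ => h
  | c :: L, h, hneg => by
    refine neg_of_imp_disj (L := L) ?_ (fun d hd => hneg d (List.mem_cons_of_mem _ hd))
    refine entail2 (P := P.imp (disj (c :: L))) (Q := c.neg) ?_ h (hneg c List.mem_cons_self)
    intro val hr h1 h2
    rw [show disj (c :: L) = Fml.imp c.neg (disj L) from rfl] at h1
    rw [hr.2] at h1 ⊢
    rw [hr.2, hr.valNeg] at h1
    rw [hr.valNeg] at h2
    cases hp : val P <;> cases hc : val c <;> cases hd : val (disj L) <;>
      simp_all

end MNPsec

namespace MNPsec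
open Fml

/-- Literal of `B` relative to the set `t`. -/
def lit (t : Finset Fml) (B : Fml) : Fml := if B ∈ t then B else B.neg

/-- Characteristic formula of `t` relative to the finite set `Sf`. -/
noncomputable def charF (Sf t : Finset Fml) : Fml := conj (Sf.toList.map (lit t))

lemma val_charF {val} (h : Resp val) {Sf t : Finset Fml} :
    val (charF Sf t) = true ↔ ∀ B ∈ Sf, (val B = true ↔ B ∈ t) := by
  rw [charF, val_conj h, List.all_eq_true]
  constructor
  · intro hall B hB
    have hlit := hall (lit t B) (List.mem_map.2 ⟨B, Finset.mem_toList.2 hB, rfl⟩)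
    by_cases hBt : B ∈ t
    · simp only [lit, if_pos hBt] at hlit
      exact ⟨fun _ => hBt, fun _ => hlit⟩
    · simp only [lit, if_neg hBt, h.valNeg] at hlit
      constructor
      · intro hv; rw [hv] at hlit; simp at hlit
      · intro hv; exact absurd hv hBt
  · intro hiff x hx
    obtain ⟨B, hB, rfl⟩ := List.mem_map.1 hx
    have hBS := Finset.mem_toList.1 hB
    by_cases hBt : B ∈ t
    · simp only [lit, if_pos hBt]
      exact (hiff B hBS).2 hBt
    · simp only [lit, if_neg hBt, h.valNeg]
      cases hv : val B with
      | false => rfl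
      | true => exact absurd ((hiff B hBS).1 hv) hBt

/-- Subformulas. -/
def subf : Fml → Finset Fml
  | Fml.var n => {Fml.var n}
  | Fml.bot => {Fml.bot}
  | Fml.imp B C => insert (Fml.imp B C) (subf B ∪ subf C)
  | Fml.box B => insert (Fml.box B) (subf B)

lemma self_mem_subf (B : Fml) : B ∈ subf B := by
  cases B <;> simp [subf]

lemma subf_trans : ∀ {A B : Fml}, B ∈ subf A → subf B ⊆ subf A := by
  intro A
  induction A with
  | var n => intro B hB; simp [subf] at hB; subst hB; exact subset_rfl
  | bot => intro B hB; simp [subf] at hB; subst hB; exact subset_rfl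
  | imp A1 A2 ih1 ih2 =>
    intro B hB
    rw [subf, Finset.mem_insert] at hB
    rcases hB with rfl | hB
    · exact subset_rfl
    · rcases Finset.mem_union.1 hB with hB | hB
      · exact fun x hx => Finset.mem_insert_of_mem (Finset.mem_union_left _ (ih1 hB hx))
      · exact fun x hx => Finset.mem_insert_of_mem (Finset.mem_union_right _ (ih2 hB hx))
  | box A1 ih =>
    intro B hB
    rw [subf, Finset.mem_insert] at hB
    rcases hB with rfl | hB
    · exact subset_rfl
    · exact fun x hx => Finset.mem_insert_of_mem (ih hB hx)

lemma imp_mem_subf_left {A B C : Fml} (h : Fml.imp B C ∈ subf A) : B ∈ subf A := by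
  refine subf_trans h ?_
  rw [subf]
  exact Finset.mem_insert_of_mem (Finset.mem_union_left _ (self_mem_subf B))

lemma imp_mem_subf_right {A B C : Fml} (h : Fml.imp B C ∈ subf A) : C ∈ subf A := by
  refine subf_trans h ?_
  rw [subf]
  exact Finset.mem_insert_of_mem (Finset.mem_union_right _ (self_mem_subf C))

lemma box_mem_subf {A B : Fml} (h : Fml.box B ∈ subf A) : B ∈ subf A := by
  refine subf_trans h ?_
  rw [subf]
  exact Finset.mem_insert_of_mem (self_mem_subf B)

end MNPsec

namespace MNPsec
open Fml

variable (A0 : Fml)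

/-- Consistency of a set relative to MNP. -/
def Consistent (t : Finset Fml) : Prop := ¬ MNP ((charF (subf A0) t).neg)

/-- Worlds of the canonical model. -/
def Wld : Type := {t : Finset Fml // t ⊆ subf A0 ∧ Consistent A0 t}

instance : Finite (Wld A0) := by
  have hfin : {t : Finset Fml | t ⊆ subf A0 ∧ Consistent A0 t}.Finite := by
    refine Set.Finite.subset (Finset.finite_toSet (subf A0).powerset) ?_
    intro t ht
    simpa [Finset.mem_powerset] using ht.1
  exact hfin.to_subtype

/-- Existence of an atom satisfying `p`, given a `p`-forcing consistent formula. -/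
lemma exists_atom (p : Finset Fml → Prop) (φ : Fml)
    (hcons : ¬ MNP φ.neg)
    (hsem : ∀ val : Fml → Bool, Resp val → val φ = true →
      p (Finset.filter (fun B => val B = true) (subf A0))) :
    ∃ w : Wld A0, p w.val := by
  by_contra hno
  push_neg at hno
  classical
  set L : List (Finset Fml) :=
    ((subf A0).powerset.toList.filter (fun t => decide (p t))) with hL
  apply hcons
  have htaut : IsTautology (φ.imp (disj (L.map (charF (subf A0))))) := by
    intro val hb hi
    have hr : Resp val := ⟨hb, hi⟩
    rw [hi]
    cases hv : val φ with
    | false => rfl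
    | true =>
      suffices hd : val (disj (L.map (charF (subf A0)))) = true by simp [hd]
      rw [val_disj hr, List.any_eq_true]
      set t := Finset.filter (fun B => val B = true) (subf A0) with ht
      have hpt : p t := hsem val hr hv
      refine ⟨charF (subf A0) t, List.mem_map.2 ⟨t, ?_, rfl⟩, ?_⟩
      · rw [hL, List.mem_filter]
        constructor
        · rw [Finset.mem_toList, Finset.mem_powerset]
          exact Finset.filter_subset _ _
        · exact decide_eq_true hpt
      · rw [val_charF hr]
        intro B hB
        rw [ht, Finset.mem_filter]
        exact ⟨fun h => ⟨hB, h⟩, fun h => h.2⟩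
  refine neg_of_imp_disj (MNProv.taut htaut) ?_
  intro c hc
  obtain ⟨t, htL, rfl⟩ := List.mem_map.1 hc
  rw [hL, List.mem_filter, Finset.mem_toList, Finset.mem_powerset] at htL
  have hpt : p t := of_decide_eq_true htL.2
  by_contra hcon
  exact hno ⟨t, htL.1, hcon⟩ hpt

/-- If membership of `w` forces a contradiction on every valuation, `w` is inconsistent. -/
lemma incons_of (t : Finset Fml)
    (h : ∀ val : Fml → Bool, Resp val →
      (∀ B ∈ subf A0, (val B = true ↔ B ∈ t)) → False) :
    MNP ((charF (subf A0) t).neg) := by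
  refine MNProv.taut ?_
  intro val hb hi
  have hr : Resp val := ⟨hb, hi⟩
  have hc : val (charF (subf A0) t) = false := by
    cases hv : val (charF (subf A0) t) with
    | false => rfl
    | true => exact absurd ((val_charF hr).1 hv) (fun hiff => h val hr hiff)
  rw [show (charF (subf A0) t).neg = Fml.imp (charF (subf A0) t) Fml.bot from rfl, hi, hc]
  rfl

lemma atom_not_bot (w : Wld A0) : Fml.bot ∉ w.val := by
  intro hmem
  refine w.2.2 (incons_of A0 w.val ?_)
  intro val hr hiff
  have := (hiff Fml.bot (w.2.1 hmem)).2 hmem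
  rw [hr.1] at this
  exact Bool.false_ne_true this

lemma atom_imp (w : Wld A0) {B C : Fml} (h : Fml.imp B C ∈ subf A0) :
    (Fml.imp B C ∈ w.val ↔ (B ∈ w.val → C ∈ w.val)) := by
  by_contra hnot
  refine w.2.2 (incons_of A0 w.val ?_)
  intro val hr hiff
  apply hnot
  rw [← hiff _ h, ← hiff _ (imp_mem_subf_left h), ← hiff _ (imp_mem_subf_right h), hr.2]
  cases val B <;> cases val C <;> simp

/-- `X ∈ w` and `⊢ ¬X` contradict consistency. -/
lemma incons_of_neg (w : Wld A0) {X : Fml} (hX : X ∈ w.val) (h : MNP X.neg) : False := by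
  refine w.2.2 (entail1 (P := X.neg) ?_ h)
  intro val hr h1
  rw [hr.valNeg] at h1 ⊢
  cases hv : val (charF (subf A0) w.val) with
  | false => rfl
  | true =>
    have := ((val_charF hr).1 hv X (w.2.1 hX)).2 hX
    rw [this] at h1
    exact absurd h1 (by simp)

/-- `Y ∉ w`, `Y ∈ subf A0` and `⊢ Y` contradict consistency. -/
lemma incons_of_prov (w : Wld A0) {Y : Fml} (hY : Y ∈ subf A0) (hYw : Y ∉ w.val)
    (h : MNP Y) : False := by
  refine w.2.2 (entail1 (P := Y) ?_ h)
  intro val hr h1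
  rw [hr.valNeg]
  cases hv : val (charF (subf A0) w.val) with
  | false => rfl
  | true =>
    have := ((val_charF hr).1 hv Y hY).1 h1
    exact absurd this hYw

/-- `X ∈ w`, `Y ∉ w`, `Y ∈ subf A0` and `⊢ X → Y` contradict consistency. -/
lemma incons_of_imp (w : Wld A0) {X Y : Fml} (hX : X ∈ w.val) (hY : Y ∈ subf A0)
    (hYw : Y ∉ w.val) (h : MNP (X.imp Y)) : False := by
  refine w.2.2 (entail1 (P := X.imp Y) ?_ h)
  intro val hr h1
  rw [hr.valNeg]
  cases hv : val (charF (subf A0) w.val) with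
  | false => rfl
  | true =>
    have hiff := (val_charF hr).1 hv
    have hx : val X = true := (hiff X (w.2.1 hX)).2 hX
    have hy : val Y = false := by
      cases hvy : val Y with
      | false => rfl
      | true => exact absurd ((hiff Y hY).1 hvy) hYw
    rw [hr.2, hx, hy] at h1
    exact absurd h1 (by simp)

/-- Canonical relation. -/
def relC (w : Wld A0) (V : Set (Wld A0)) : Prop :=
  Set.univ ⊆ V ∨ ∃ C : Fml, Fml.box C ∈ subf A0 ∧ Fml.box C ∉ w.val ∧
    ({y : Wld A0 | C ∉ y.val}).Nonempty ∧ {y : Wld A0 | C ∉ y.val} ⊆ V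

/-- Canonical frame. -/
def frameC (hne : Nonempty (Wld A0)) : MNFrame (Wld A0) where
  nonempty := hne
  rel := relC A0
  rel_nonempty := by
    intro x V h
    rcases h with h | ⟨C, _, _, ⟨y, hy⟩, hsub⟩
    · obtain ⟨w⟩ := hne
      exact ⟨w, h (Set.mem_univ w)⟩
    · exact ⟨y, hsub hy⟩
  mono := by
    intro x V U h hVU
    rcases h with h | ⟨C, h1, h2, h3, h4⟩
    · exact Or.inl (h.trans hVU)
    · exact Or.inr ⟨C, h1, h2, h3, h4.trans hVU⟩

/-- Canonical satisfaction. -/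
def SatC : Fml → Wld A0 → Prop
  | Fml.var n, w => Fml.var n ∈ w.val
  | Fml.bot, _ => False
  | Fml.imp B C, w => SatC B w → SatC C w
  | Fml.box B, w => ∀ V : Set (Wld A0), relC A0 w V → ∃ y ∈ V, SatC B y

lemma isSatC (hne : Nonempty (Wld A0)) :
    IsSat (frameC A0 hne) (fun w B => SatC A0 B w) where
  bot := fun x h => h
  imp := fun _ _ _ => Iff.rfl
  box := fun _ _ => Iff.rfl

end MNPsec

namespace MNPsec
open Fml

variable (A0 : Fml)

lemma truth : ∀ (B : Fml), B ∈ subf A0 → ∀ w : Wld A0, (SatC A0 B w ↔ B ∈ w.val) := by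
  intro B
  induction B with
  | var n => intro _ w; exact Iff.rfl
  | bot => intro _ w; exact ⟨fun h => h.elim, fun h => absurd h (atom_not_bot A0 w)⟩
  | imp B C ih1 ih2 =>
    intro hS w
    rw [show SatC A0 (Fml.imp B C) w = (SatC A0 B w → SatC A0 C w) from rfl,
      ih1 (imp_mem_subf_left hS) w, ih2 (imp_mem_subf_right hS) w, atom_imp A0 w hS]
  | box B ih =>
    intro hS w
    have hBS : B ∈ subf A0 := box_mem_subf hS
    constructor
    · intro hsat
      by_contra hmem
      have hVne : ({y : Wld A0 | B ∉ y.val}).Nonempty := by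
        obtain ⟨y, hy⟩ := exists_atom A0 (fun t => B ∉ t) B.neg
          (fun hprov => by
            -- ⊢ ¬¬B gives ⊢ B, then ⊢ □B, contradicting □B ∉ w
            have hB : MNP B := by
              refine entail1 (P := B.neg.neg) ?_ hprov
              intro val hr h1
              rw [hr.valNeg, hr.valNeg] at h1
              simpa using h1
            exact incons_of_prov A0 w hS hmem (MNProv.nec hB))
          (fun val hr hv => by
            rw [hr.valNeg] at hv
            intro hBt
            rw [Finset.mem_filter] at hBt
            rw [hBt.2] at hv
            exact absurd hv (by simp))
        exact ⟨y, hy⟩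
      have hrel : relC A0 w {y : Wld A0 | B ∉ y.val} :=
        Or.inr ⟨B, hS, hmem, hVne, subset_rfl⟩
      obtain ⟨y, hy, hsaty⟩ := hsat _ hrel
      exact hy ((ih hBS y).1 hsaty)
    · intro hmem V hrel
      rcases hrel with huniv | ⟨C, hCS, hCw, hne', hsub⟩
      · -- V ⊇ univ; need some atom containing B
        obtain ⟨y, hy⟩ := exists_atom A0 (fun t => B ∈ t) B
          (fun hprov => by
            -- ⊢ ¬B gives ⊢ □B → □⊥ by RM, and ⊢ ¬□⊥, so ⊢ ¬□B, contradicting □B ∈ w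
            have h1 : MNP ((Fml.box B).imp (Fml.box Fml.bot)) := MNProv.rm hprov
            have h2 : MNP (Fml.box Fml.bot).neg := MNProv.ax rfl
            have h3 : MNP (Fml.box B).neg := by
              refine entail2 (P := (Fml.box B).imp (Fml.box Fml.bot))
                (Q := (Fml.box Fml.bot).neg) ?_ h1 h2
              intro val hr ha hb
              rw [hr.2] at ha
              rw [hr.valNeg] at hb ⊢
              cases hx : val (Fml.box B) <;> cases hy : val (Fml.box Fml.bot) <;>
                simp_all
            exact incons_of_neg A0 w hmem h3)
          (fun val hr hv => Finset.mem_filter.2 ⟨hBS, hv⟩)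
        exact ⟨y, huniv (Set.mem_univ y), (ih hBS y).2 hy⟩
      · -- need an atom with B and without C
        obtain ⟨y, hy1, hy2⟩ := exists_atom A0 (fun t => B ∈ t ∧ C ∉ t) (B.and C.neg)
          (fun hprov => by
            -- ⊢ ¬(B ∧ ¬C) gives ⊢ B → C, so ⊢ □B → □C, contradicting □B ∈ w, □C ∉ w
            have h1 : MNP (B.imp C) := by
              refine entail1 (P := (B.and C.neg).neg) ?_ hprov
              intro val hr ha
              rw [hr.valNeg, hr.valAnd, hr.valNeg] at ha
              rw [hr.2]
              cases hx : val B <;> cases hy : val C <;> simp_all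
            exact incons_of_imp A0 w hmem hCS hCw (MNProv.rm h1))
          (fun val hr hv => by
            rw [hr.valAnd, hr.valNeg] at hv
            have hb : val B = true := by
              cases hx : val B <;> simp_all
            have hc : val C = false := by
              cases hy : val C <;> simp_all
            refine ⟨Finset.mem_filter.2 ⟨hBS, hb⟩, ?_⟩
            intro hCt
            rw [Finset.mem_filter, hc] at hCt
            exact absurd hCt.2 (by simp))
        exact ⟨y, hsub hy2, (ih hBS y).2 hy1⟩

end MNPsec

namespace MNPsec
open Fml

lemma soundness {A : Fml} (h : MNP A) :
    ∀ (W : Type) (F : MNFrame W), F.IsMNP → Valid F A := by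
  induction h with
  | @taut A htaut =>
    intro W F _ Sat hS x
    classical
    have hval : ∀ B : Fml, decide (Sat x B) = true → Sat x B := fun B => of_decide_eq_true
    have := htaut (fun B => decide (Sat x B)) (decide_eq_false (hS.bot x))
      (fun B C => by
        by_cases hB : Sat x B <;> by_cases hC : Sat x C <;>
          simp [hS.imp, hB, hC])
    exact of_decide_eq_true this
  | @ax A hax =>
    intro W F hMNP Sat hS x
    rw [show A = Fml.imp (Fml.box Fml.bot) Fml.bot from hax, hS.imp]
    intro hbox
    obtain ⟨V, hV⟩ := hMNP x
    obtain ⟨y, _, hy⟩ := (hS.box x Fml.bot).1 hbox V hV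
    exact absurd hy (hS.bot y)
  | @mp A B _ _ ih1 ih2 =>
    intro W F hMNP Sat hS x
    exact (hS.imp x A B).1 (ih1 W F hMNP Sat hS x) (ih2 W F hMNP Sat hS x)
  | @nec A _ ih =>
    intro W F hMNP Sat hS x
    rw [hS.box]
    intro V hV
    obtain ⟨y, hy⟩ := F.rel_nonempty x V hV
    exact ⟨y, hy, ih W F hMNP Sat hS y⟩
  | @rm A B _ ih =>
    intro W F hMNP Sat hS x
    rw [hS.imp]
    intro hbox
    rw [hS.box]
    intro V hV
    obtain ⟨y, hy, hA⟩ := (hS.box x A).1 hbox V hV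
    exact ⟨y, hy, (hS.imp y A B).1 (ih W F hMNP Sat hS y) hA⟩

lemma completeness {A : Fml}
    (h : ∀ (W : Type) (F : MNFrame W), Finite W → F.IsMNP → Valid F A) : MNP A := by
  by_contra hA
  obtain ⟨w₀, hw₀⟩ := exists_atom A (fun t => A ∉ t) A.neg
    (fun hprov => by
      refine hA (entail1 (P := A.neg.neg) ?_ hprov)
      intro val hr h1
      rw [hr.valNeg, hr.valNeg] at h1
      simpa using h1)
    (fun val hr hv => by
      rw [hr.valNeg] at hv
      intro hAt
      rw [Finset.mem_filter] at hAt
      rw [hAt.2] at hv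
      exact absurd hv (by simp))
  have hne : Nonempty (Wld A) := ⟨w₀⟩
  have hMNP : (frameC A hne).IsMNP := by
    intro x
    exact ⟨Set.univ, Or.inl subset_rfl⟩
  have hval := h (Wld A) (frameC A hne) (inferInstance) hMNP
    (fun w B => SatC A B w) (isSatC A hne) w₀
  exact hw₀ ((truth A A (self_mem_subf A) w₀).1 hval)

end MNPsec

theorem stmt7 (A : Fml) :
    (MNP A ↔ ∀ (W : Type) (F : MNFrame W), F.IsMNP → Valid F A) ∧
    (MNP A ↔ ∀ (W : Type) (F : MNFrame W), Finite W → F.IsMNP → Valid F A) := by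
  constructor
  · exact ⟨fun h => MNPsec.soundness h,
      fun h => MNPsec.completeness (fun W F _ hM => h W F hM)⟩
  · exact ⟨fun h W F _ hM => MNPsec.soundness h W F hM,
      fun h => MNPsec.completeness h⟩
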